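/- The number of lattice paths of length 2n with steps (1,1) and (1,−1), starting at the origin, never passing below the x-axis, and with maximum height at most h, equals Σ_{s=0}^{⌊h/2⌋} Σ_{k∈ℤ} ((1 + 2s + 2k(h+2))/(2n+1)) · C(2n+1, n − s − k(h+2)). -/

import Mathlib

/-- The height of the walk `p` after `k` steps (up-steps `true ↦ +1`, down-steps
`false ↦ −1`). -/
def pathHeight {m : ℕ} (p : Fin m → Bool) (k : ℕ) : ℤ :=
  ∑ i ∈ Finset.univ.filter (fun i : Fin m => (i : ℕ) < k),
    (if p i then (1 : ℤ) else -1)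

/-- Binomial coefficient `C(m, j)` with integer lower index, zero when `j < 0`. -/
def intChoose (m : ℕ) (j : ℤ) : ℕ :=
  if 0 ≤ j then m.choose j.toNat else 0

namespace BHCF

lemma intChoose_eq_zero_of_neg {m : ℕ} {j : ℤ} (hj : j < 0) : intChoose m j = 0 := by
  simp [intChoose, not_le.2 hj]

lemma intChoose_eq_zero_of_gt {m : ℕ} {j : ℤ} (hj : (m : ℤ) < j) : intChoose m j = 0 := by
  have h0 : 0 ≤ j := le_of_lt (lt_of_le_of_lt (Int.ofNat_nonneg m) hj)
  have : m < j.toNat := by omega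
  simp [intChoose, h0, Nat.choose_eq_zero_of_lt this]

lemma intChoose_pascal (m : ℕ) (j : ℤ) :
    intChoose (m + 1) j = intChoose m j + intChoose m (j - 1) := by
  rcases lt_or_ge j 0 with hj | hj
  · rw [intChoose_eq_zero_of_neg hj, intChoose_eq_zero_of_neg hj,
      intChoose_eq_zero_of_neg (by omega)]
  rcases eq_or_lt_of_le hj with hj0 | hj0
  · simp [intChoose, ← hj0]
  · have h1 : (0:ℤ) ≤ j - 1 := by omega
    have ht : j.toNat = (j-1).toNat + 1 := by omega
    simp only [intChoose, if_pos hj, if_pos h1, ht, Nat.choose_succ_succ', Nat.add_comm]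

lemma intChoose_symm (m : ℕ) (j : ℤ) : intChoose m j = intChoose m ((m : ℤ) - j) := by
  rcases lt_or_ge j 0 with hj | hj
  · rw [intChoose_eq_zero_of_neg hj, intChoose_eq_zero_of_gt (by omega)]
  rcases le_or_gt j m with hjm | hjm
  · have h1 : (0:ℤ) ≤ (m:ℤ) - j := by omega
    have h2 : ((m:ℤ) - j).toNat = m - j.toNat := by omega
    have h3 : j.toNat ≤ m := by omega
    simp [intChoose, hj, h1, h2, (Nat.choose_symm h3).symm]
    exact fun hc => absurd hc (by omega)
  · rw [intChoose_eq_zero_of_gt hjm, intChoose_eq_zero_of_neg (by omega)]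


def step (b : Bool) : ℤ := if b then 1 else -1

lemma pathHeight_eq {m : ℕ} (p : Fin m → Bool) (k : ℕ) :
    pathHeight p k = ∑ i : Fin m, if (i : ℕ) < k then step (p i) else 0 := by
  rw [pathHeight, Finset.sum_filter]
  rfl

lemma pathHeight_snoc_of_le {m : ℕ} (q : Fin m → Bool) (b : Bool) {k : ℕ} (hk : k ≤ m) :
    pathHeight (Fin.snoc q b) k = pathHeight q k := by
  rw [pathHeight_eq, pathHeight_eq, Fin.sum_univ_castSucc]
  have hlast : ¬ ((Fin.last m : ℕ) < k) := by simp [Fin.last]; omega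
  rw [if_neg hlast, add_zero]
  refine Finset.sum_congr rfl fun i _ => ?_
  simp [Fin.snoc_castSucc]

lemma pathHeight_snoc_succ {m : ℕ} (q : Fin m → Bool) (b : Bool) :
    pathHeight (Fin.snoc q b) (m + 1) = pathHeight q m + step b := by
  rw [pathHeight_eq, pathHeight_eq, Fin.sum_univ_castSucc]
  have hlast : ((Fin.last m : ℕ) < m + 1) := by simp [Fin.last]
  rw [if_pos hlast, Fin.snoc_last]
  congr 1
  refine Finset.sum_congr rfl fun i _ => ?_
  have h1 : ((i.castSucc : ℕ) < m + 1) := by have := i.isLt; simp [Fin.castSucc]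
  have h2 : ((i : ℕ) < m) := i.isLt
  rw [if_pos h1, if_pos h2, Fin.snoc_castSucc]


def f (h : ℕ) : ℕ → ℤ → ℕ
  | 0, y => if y = 0 then 1 else 0
  | (m+1), y => if 0 ≤ y ∧ y ≤ (h:ℤ) then f h m (y-1) + f h m (y+1) else 0

open scoped Classical in
noncomputable def T (h m : ℕ) (y : ℤ) : Finset (Fin m → Bool) :=
  Finset.univ.filter (fun p =>
    (∀ k ∈ Finset.range (m+1), 0 ≤ pathHeight p k ∧ pathHeight p k ≤ (h:ℤ)) ∧
      pathHeight p m = y)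

lemma pathHeight_zero {m : ℕ} (p : Fin m → Bool) : pathHeight p 0 = 0 := by
  simp [pathHeight]

lemma mem_T_snoc {h m : ℕ} {y : ℤ} (hy0 : 0 ≤ y) (hyh : y ≤ (h:ℤ)) (q : Fin m → Bool)
    (b : Bool) : Fin.snoc q b ∈ T h (m+1) y ↔ q ∈ T h m (y - step b) := by
  simp only [T, Finset.mem_filter, Finset.mem_univ, true_and, Finset.mem_range]
  constructor
  · rintro ⟨hQ, hend⟩
    refine ⟨fun k hk => ?_, ?_⟩
    · rw [← pathHeight_snoc_of_le q b (by omega : k ≤ m)]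
      exact hQ k (by omega)
    · rw [← hend, pathHeight_snoc_succ]; ring
  · rintro ⟨hQ, hend⟩
    have hstep : pathHeight (Fin.snoc q b) (m+1) = y := by
      rw [pathHeight_snoc_succ, hend]; ring
    refine ⟨fun k hk => ?_, hstep⟩
    rcases Nat.lt_or_ge k (m+1) with hk' | hk'
    · rw [pathHeight_snoc_of_le q b (by omega : k ≤ m)]
      exact hQ k (by omega)
    · have : k = m + 1 := by omega
      rw [this, hstep]; exact ⟨hy0, hyh⟩

lemma snoc_inj {m : ℕ} (b : Bool) :
    Function.Injective (fun q : Fin m → Bool => (Fin.snoc q b : Fin (m+1) → Bool)) := by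
  intro q q' hqq
  have := congrArg Fin.init hqq
  simpa [Fin.init_snoc] using this

lemma card_T_succ (h m : ℕ) (y : ℤ) :
    (T h (m+1) y).card = if 0 ≤ y ∧ y ≤ (h:ℤ) then
      (T h m (y-1)).card + (T h m (y+1)).card else 0 := by
  split_ifs with hy
  · obtain ⟨hy0, hyh⟩ := hy
    have hsplit : T h (m+1) y =
        ((T h m (y-1)).image (fun q : Fin m → Bool => (Fin.snoc q true : Fin (m+1) → Bool))) ∪
        ((T h m (y+1)).image (fun q : Fin m → Bool => (Fin.snoc q false : Fin (m+1) → Bool))) := by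
      ext p
      simp only [Finset.mem_union, Finset.mem_image]
      constructor
      · intro hp
        have hps : Fin.snoc (Fin.init p) (p (Fin.last m)) = p := Fin.snoc_init_self p
        cases hb : p (Fin.last m)
        · right
          refine ⟨Fin.init p, ?_, by rw [← hb, hps]⟩
          have := (mem_T_snoc hy0 hyh (Fin.init p) false).1 (by rw [← hb, hps]; exact hp)
          simpa [step] using this
        · left
          refine ⟨Fin.init p, ?_, by rw [← hb, hps]⟩
          have := (mem_T_snoc hy0 hyh (Fin.init p) true).1 (by rw [← hb, hps]; exact hp)
          simpa [step] using this
      · rintro (⟨q, hq, rfl⟩ | ⟨q, hq, rfl⟩)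
        · exact (mem_T_snoc hy0 hyh q true).2 (by simpa [step] using hq)
        · exact (mem_T_snoc hy0 hyh q false).2 (by simpa [step] using hq)
    have hdisj : Disjoint ((T h m (y-1)).image (fun q : Fin m → Bool => (Fin.snoc q true : Fin (m+1) → Bool)))
        ((T h m (y+1)).image (fun q : Fin m → Bool => (Fin.snoc q false : Fin (m+1) → Bool))) := by
      rw [Finset.disjoint_left]
      rintro p hp hp'
      obtain ⟨q, _, rfl⟩ := Finset.mem_image.1 hp
      obtain ⟨q', _, he⟩ := Finset.mem_image.1 hp'
      have := congrArg (fun r => r (Fin.last m)) he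
      simp [Fin.snoc_last] at this
    rw [hsplit, Finset.card_union_of_disjoint hdisj,
      Finset.card_image_of_injective _ (snoc_inj true),
      Finset.card_image_of_injective _ (snoc_inj false)]
  · rw [Finset.card_eq_zero, Finset.eq_empty_iff_forall_notMem]
    intro p hp
    simp only [T, Finset.mem_filter, Finset.mem_univ, true_and, Finset.mem_range] at hp
    obtain ⟨hQ, hend⟩ := hp
    have := hQ (m+1) (by omega)
    rw [hend] at this
    exact hy this

lemma card_T (h m : ℕ) (y : ℤ) : (T h m y).card = f h m y := by
  induction m generalizing y with
  | zero =>
    simp only [f]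
    have huniv : (Finset.univ : Finset (Fin 0 → Bool)).card = 1 := by simp
    split_ifs with hy
    · subst hy
      rw [← huniv]
      congr 1
      ext p
      simp [T, pathHeight_zero]
    · rw [Finset.card_eq_zero, Finset.eq_empty_iff_forall_notMem]
      intro p hp
      simp only [T, Finset.mem_filter] at hp
      rw [pathHeight_zero] at hp
      exact hy hp.2.2.symm
  | succ m ih =>
    rw [card_T_succ, f]
    split_ifs with hy
    · rw [ih, ih]
    · rfl


noncomputable def W (h m : ℕ) (a : ℤ) : ℚ :=
  ∑ᶠ k : ℤ, (intChoose m (a - k * ((h:ℤ) + 2)) : ℚ)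

lemma support_finite (m : ℕ) (a b : ℤ) (hb : b ≠ 0) :
    (Function.support fun k : ℤ => (intChoose m (a + k * b) : ℚ)).Finite := by
  apply Set.Finite.subset (Set.finite_Icc (-(|a| + m)) (|a| + m))
  intro k hk
  simp only [Function.support, Set.mem_setOf_eq, ne_eq, Nat.cast_eq_zero] at hk
  have h1 : 0 ≤ a + k * b := by
    by_contra hc
    exact hk (intChoose_eq_zero_of_neg (by omega))
  have h2 : a + k * b ≤ m := by
    by_contra hc
    exact hk (intChoose_eq_zero_of_gt (by omega))
  have hab : |k * b| ≤ |a| + m := by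
    have : |a + k * b| ≤ m := by rw [abs_of_nonneg h1]; omega
    have h4 : |k * b| ≤ |a + k * b| + |a| := by
      have h5 := abs_sub (a + k * b) a
      simpa [add_sub_cancel_left] using h5
    omega
  have hb1 : 1 ≤ |b| := Int.one_le_abs hb
  have hk2 : |k| ≤ |a| + m := by
    have := abs_mul k b
    nlinarith [abs_nonneg k, abs_nonneg (k*b)]
  simp only [Set.mem_Icc]
  exact abs_le.1 hk2

lemma W_support_finite (h m : ℕ) (a : ℤ) :
    (Function.support fun k : ℤ => (intChoose m (a - k * ((h:ℤ) + 2)) : ℚ)).Finite := by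
  have h0 : ∀ k : ℤ, a - k * ((h:ℤ)+2) = a + k * (-((h:ℤ)+2)) := by intro k; ring
  simp only [h0]
  exact support_finite m a _ (by omega)

lemma W_pascal (h m : ℕ) (a : ℤ) : W h (m+1) a = W h m a + W h m (a - 1) := by
  rw [W, W, W, ← finsum_add_distrib (W_support_finite h m a)
    (by have := W_support_finite h m (a-1); simp only [sub_sub, add_comm] at this ⊢; exact this)]
  apply finsum_congr
  intro k
  rw [intChoose_pascal]
  push_cast
  ring_nf

lemma W_periodic (h m : ℕ) (a : ℤ) : W h m (a + ((h:ℤ) + 2)) = W h m a := by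
  rw [W, W]
  have := finsum_comp_equiv (Equiv.addRight (1:ℤ))
    (f := fun k : ℤ => (intChoose m (a + ((h:ℤ)+2) - k * ((h:ℤ)+2)) : ℚ))
  rw [← this]
  apply finsum_congr
  intro k
  congr 1
  simp [Equiv.coe_addRight]
  ring_nf

noncomputable def G (h m : ℕ) (y : ℤ) : ℚ :=
  if ((m : ℤ) - y) % 2 = 0 then
    W h m (((m : ℤ) - y) / 2) - W h m (((m : ℤ) - y) / 2 + y + 1)
  else 0

lemma G_rec (h m : ℕ) (y : ℤ) : G h (m+1) y = G h m (y-1) + G h m (y+1) := by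
  by_cases hpar : ((m : ℤ) + 1 - y) % 2 = 0
  · have hp1 : ((m : ℤ) - (y-1)) % 2 = 0 := by omega
    have hp2 : ((m : ℤ) - (y+1)) % 2 = 0 := by omega
    have hu1 : ((m : ℤ) - (y-1)) / 2 = ((m : ℤ) + 1 - y) / 2 := by omega
    have hu2 : ((m : ℤ) - (y+1)) / 2 = ((m : ℤ) + 1 - y) / 2 - 1 := by omega
    rw [G, G, G, if_pos (by push_cast; omega), if_pos hp1, if_pos hp2]
    have hc : ((m : ℤ) + 1 - y) = ((m+1 : ℕ) : ℤ) - y := by push_cast; ring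
    rw [← hc, hu1, hu2]
    set u := ((m : ℤ) + 1 - y) / 2 with hu
    rw [W_pascal, W_pascal]
    have e1 : u + y + 1 - 1 = u + y := by ring
    have e2 : u - 1 + (y + 1) + 1 = u + y + 1 := by ring
    have e3 : u + (y - 1) + 1 = u + y := by ring
    rw [e1, e2, e3]
    ring
  · rw [G, G, G, if_neg (by push_cast; omega), if_neg (by omega), if_neg (by omega)]
    ring

lemma G_neg_one (h m : ℕ) : G h m (-1) = 0 := by
  rw [G]
  split_ifs with hp
  · have : ((m : ℤ) - (-1)) / 2 + (-1) + 1 = ((m : ℤ) - (-1)) / 2 := by ring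
    rw [this, sub_self]
  · rfl

lemma G_top (h m : ℕ) : G h m ((h : ℤ) + 1) = 0 := by
  rw [G]
  split_ifs with hp
  · have : ((m : ℤ) - ((h:ℤ)+1)) / 2 + ((h:ℤ)+1) + 1
        = ((m : ℤ) - ((h:ℤ)+1)) / 2 + ((h:ℤ) + 2) := by ring
    rw [this, W_periodic, sub_self]
  · rfl


lemma intChoose_zero_eq (j : ℤ) : intChoose 0 j = if j = 0 then 1 else 0 := by
  rcases lt_trichotomy j 0 with hj | hj | hj
  · rw [intChoose_eq_zero_of_neg hj, if_neg (by omega)]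
  · simp [intChoose, hj]
  · rw [intChoose_eq_zero_of_gt (by exact_mod_cast hj), if_neg (by omega)]

lemma W_zero_one (h : ℕ) : W h 0 0 = 1 := by
  rw [W]
  rw [finsum_eq_single _ (0:ℤ) ?_]
  · norm_num [intChoose_zero_eq]
  · intro k hk
    have : (0:ℤ) - k * ((h:ℤ)+2) ≠ 0 := by
      intro hc
      have : k * ((h:ℤ)+2) = 0 := by omega
      rcases mul_eq_zero.1 this with h1 | h1
      · exact hk h1
      · omega
    rw [intChoose_zero_eq, if_neg this]
    norm_num

lemma W_zero_zero (h : ℕ) (a : ℤ) (ha : a ≠ 0) (hlt : |a| < (h:ℤ)+2) : W h 0 a = 0 := by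
  rw [W]
  have : ∀ k : ℤ, (intChoose 0 (a - k * ((h:ℤ)+2)) : ℚ) = 0 := by
    intro k
    have hne : a - k * ((h:ℤ)+2) ≠ 0 := by
      intro hc
      have hdvd : ((h:ℤ)+2) ∣ a := ⟨k, by rw [mul_comm]; omega⟩
      have := Int.le_of_dvd (abs_pos.2 ha) ((dvd_abs _ _).2 hdvd)
      omega
    simp [intChoose_zero_eq, hne]
  rw [finsum_congr this]
  exact finsum_zero

lemma f_eq_G (h : ℕ) : ∀ m (y : ℤ), -1 ≤ y → y ≤ (h:ℤ) + 1 → (f h m y : ℚ) = G h m y := by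
  intro m
  induction m with
  | zero =>
    intro y hy1 hy2
    rcases eq_or_lt_of_le hy1 with hm1 | hy1'
    · rw [← hm1, G_neg_one, f]
      norm_num
    rcases eq_or_lt_of_le hy2 with hp1 | hy2'
    · rw [hp1, G_top, f]
      rw [if_neg (by omega)]
      norm_num
    have hy0 : 0 ≤ y := by omega
    have hyh : y ≤ (h:ℤ) := by omega
    rcases eq_or_ne y 0 with rfl | hyne
    · rw [f, if_pos rfl, G, if_pos (by norm_num)]
      norm_num [W_zero_one]
      rw [W_zero_zero h 1 (by omega) (by rw [abs_of_nonneg] <;> omega)]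
      norm_num
    · rw [f, if_neg hyne, G]
      split_ifs with hpar
      · have hyeven : y % 2 = 0 := by omega
        have h1 : ((0:ℕ):ℤ) - y = -y := by norm_num
        rw [W_zero_zero h _ (by rw [h1]; omega) (by rw [h1, abs_lt]; omega),
          W_zero_zero h _ (by rw [h1]; omega) (by rw [h1, abs_lt]; omega)]
        norm_num
      · norm_num
  | succ m ih =>
    intro y hy1 hy2
    rcases eq_or_lt_of_le hy1 with hm1 | hy1'
    · rw [← hm1, G_neg_one, f, if_neg (by omega)]
      norm_num
    rcases eq_or_lt_of_le hy2 with hp1 | hy2'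
    · rw [hp1, G_top, f, if_neg (by omega)]
      norm_num
    have hy0 : 0 ≤ y := by omega
    have hyh : y ≤ (h:ℤ) := by omega
    rw [f, if_pos ⟨hy0, hyh⟩, G_rec]
    push_cast
    rw [ih (y-1) (by omega) (by omega), ih (y+1) (by omega) (by omega)]


lemma key_id (n : ℕ) (j : ℤ) :
    (intChoose (2*n) j : ℚ) - intChoose (2*n) (j-1)
      = ((2*(n:ℚ) + 1 - 2*(j:ℚ)) / (2*(n:ℚ) + 1)) * intChoose (2*n+1) j := by
  have hden : (2*(n:ℚ)+1) ≠ 0 := by positivity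
  rw [div_mul_eq_mul_div, eq_div_iff hden]
  rcases lt_trichotomy j 0 with hj | hj | hj
  · rw [intChoose_eq_zero_of_neg (m := 2*n) (j := j) hj,
      intChoose_eq_zero_of_neg (m := 2*n) (j := j-1) (by omega),
      intChoose_eq_zero_of_neg (m := 2*n+1) (j := j) hj]
    norm_num
  · subst hj
    norm_num [intChoose]
  · rcases le_or_gt j (2*(n:ℤ)+1) with hj2 | hj2
    · obtain ⟨t', ht'⟩ : ∃ t', j.toNat = t' + 1 := ⟨j.toNat - 1, by omega⟩
      have fact1 : (2*n+1) * Nat.choose (2*n) t' = Nat.choose (2*n+1) (t'+1) * (t'+1) := by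
        have hx := Nat.add_one_mul_choose_eq (2*n) t'
        simpa [Nat.succ_eq_add_one] using hx
      have fact2 : Nat.choose (2*n+1) (t'+1) = Nat.choose (2*n) t' + Nat.choose (2*n) (t'+1) :=
        Nat.choose_succ_succ _ _
      have e1 : (intChoose (2*n) j : ℚ) = (Nat.choose (2*n) (t'+1) : ℚ) := by
        simp [intChoose, (show (0:ℤ) ≤ j by omega), ht']
      have e2 : (intChoose (2*n) (j-1) : ℚ) = (Nat.choose (2*n) t' : ℚ) := by
        have hx : (j-1).toNat = t' := by omega
        simp [intChoose, (show (0:ℤ) ≤ j - 1 by omega), hx]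
        exact fun hc => absurd hc (by omega)
      have e3 : (intChoose (2*n+1) j : ℚ) = (Nat.choose (2*n+1) (t'+1) : ℚ) := by
        simp [intChoose, (show (0:ℤ) ≤ j by omega), ht']
      have hjq : (j:ℚ) = (t':ℚ) + 1 := by
        have hx : j = ((t' + 1 : ℕ) : ℤ) := by omega
        rw [hx]
        push_cast
        ring
      rw [e1, e2, e3, hjq]
      have f1q : (2*(n:ℚ)+1) * (Nat.choose (2*n) t' : ℚ)
          = (Nat.choose (2*n+1) (t'+1) : ℚ) * ((t':ℚ)+1) := by exact_mod_cast fact1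
      have f2q : (Nat.choose (2*n+1) (t'+1) : ℚ)
          = (Nat.choose (2*n) t' : ℚ) + (Nat.choose (2*n) (t'+1) : ℚ) := by
        exact_mod_cast fact2
      linear_combination (-2 : ℚ) * f1q + (-(2*(n:ℚ)+1)) * f2q
    · rw [intChoose_eq_zero_of_gt (m := 2*n) (j := j) (by push_cast; omega),
        intChoose_eq_zero_of_gt (m := 2*n) (j := j-1) (by push_cast; omega),
        intChoose_eq_zero_of_gt (m := 2*n+1) (j := j) (by push_cast; omega)]
      norm_num

lemma G_eval (h n s : ℕ) (hs : 2*s ≤ h) :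
    G h (2*n) (2*(s:ℤ)) = ∑ᶠ k : ℤ,
      ((1 + 2*(s:ℚ) + 2*(k:ℚ)*((h:ℚ)+2))/(2*(n:ℚ)+1)) *
        (intChoose (2*n+1) ((n:ℤ) - (s:ℤ) - k*((h:ℤ)+2)) : ℚ) := by
  have hguard : ((((2*n:ℕ)):ℤ) - 2*(s:ℤ)) % 2 = 0 := by push_cast; omega
  rw [G, if_pos hguard]
  have hu : ((((2*n:ℕ)):ℤ) - 2*(s:ℤ))/2 = (n:ℤ) - s := by push_cast; omega
  have hu2 : (n:ℤ) - s + 2*(s:ℤ) + 1 = (n:ℤ) + s + 1 := by ring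
  rw [hu, hu2]
  have step1 : W h (2*n) ((n:ℤ) + s + 1)
      = ∑ᶠ k : ℤ, (intChoose (2*n) ((n:ℤ) - s - 1 - k*((h:ℤ)+2)) : ℚ) := by
    rw [W]
    have e : ∀ k : ℤ, (intChoose (2*n) ((n:ℤ) + s + 1 - k*((h:ℤ)+2)) : ℚ)
        = (intChoose (2*n) ((n:ℤ) - s - 1 + k*((h:ℤ)+2)) : ℚ) := by
      intro k
      rw [intChoose_symm]
      congr 2
      push_cast
      ring
    rw [finsum_congr e]
    have hre := finsum_comp_equiv (Equiv.neg ℤ)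
      (f := fun k : ℤ => (intChoose (2*n) ((n:ℤ) - (s:ℤ) - 1 + k*((h:ℤ)+2)) : ℚ))
    rw [← hre]
    apply finsum_congr
    intro k
    congr 2
    simp only [Equiv.neg_apply, Int.cast_neg]
    ring
  rw [step1, W,
    ← finsum_sub_distrib (W_support_finite h (2*n) ((n:ℤ) - s))
      (W_support_finite h (2*n) ((n:ℤ) - s - 1))]
  apply finsum_congr
  intro k
  have hki := key_id n ((n:ℤ) - s - k*((h:ℤ)+2))
  have harg : (n:ℤ) - s - k*((h:ℤ)+2) - 1 = (n:ℤ) - s - 1 - k*((h:ℤ)+2) := by ring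
  rw [harg] at hki
  rw [hki]
  congr 1
  push_cast
  ring

end BHCF

theorem ballot_height_card_formula (n h : ℕ) :
    (Nat.card {p : Fin (2 * n) → Bool //
        ∀ k : ℕ, k ≤ 2 * n → 0 ≤ pathHeight p k ∧ pathHeight p k ≤ (h : ℤ)} : ℚ)
      = ∑ s ∈ Finset.range (h / 2 + 1),
          ∑ᶠ k : ℤ,
            ((1 + 2 * (s : ℚ) + 2 * (k : ℚ) * ((h : ℚ) + 2)) / (2 * (n : ℚ) + 1)) *
              (intChoose (2 * n + 1) ((n : ℤ) - (s : ℤ) - k * ((h : ℤ) + 2)) : ℚ) := by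
  classical
  have hcard : (Nat.card {p : Fin (2*n) → Bool //
      ∀ k : ℕ, k ≤ 2*n → 0 ≤ pathHeight p k ∧ pathHeight p k ≤ (h:ℤ)})
      = ∑ y ∈ Finset.Icc (0:ℤ) (h:ℤ), (BHCF.T h (2*n) y).card := by
    rw [Nat.card_eq_fintype_card, Fintype.card_subtype]
    rw [Finset.card_eq_sum_card_fiberwise
      (f := fun p : Fin (2*n) → Bool => pathHeight p (2*n))
      (t := Finset.Icc (0:ℤ) (h:ℤ)) ?_]
    · refine Finset.sum_congr rfl fun y hy => ?_
      rw [Finset.filter_filter]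
      congr 1
      ext p
      simp only [BHCF.T, Finset.mem_filter, Finset.mem_univ, true_and, Finset.mem_range]
      constructor
      · rintro ⟨h1, h2⟩
        exact ⟨fun k hk => h1 k (by omega), h2⟩
      · rintro ⟨h1, h2⟩
        exact ⟨fun k hk => h1 k (by omega), h2⟩
    · intro p hp
      simp only [Finset.mem_coe, Finset.mem_filter, Finset.mem_univ, true_and] at hp
      have := hp (2*n) le_rfl
      simpa [Finset.mem_Icc] using this
  rw [hcard]
  push_cast
  have hG : ∀ y ∈ Finset.Icc (0:ℤ) (h:ℤ), ((BHCF.T h (2*n) y).card : ℚ) = BHCF.G h (2*n) y := by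
    intro y hy
    simp only [Finset.mem_Icc] at hy
    rw [BHCF.card_T]
    exact BHCF.f_eq_G h (2*n) y (by omega) (by omega)
  rw [Finset.sum_congr rfl hG]
  have hsub : (Finset.range (h/2+1)).image (fun s : ℕ => 2*(s:ℤ)) ⊆ Finset.Icc (0:ℤ) (h:ℤ) := by
    intro y hy
    simp only [Finset.mem_image, Finset.mem_range] at hy
    obtain ⟨s, hs, rfl⟩ := hy
    simp only [Finset.mem_Icc]
    omega
  have hzero : ∀ y ∈ Finset.Icc (0:ℤ) (h:ℤ),
      y ∉ (Finset.range (h/2+1)).image (fun s : ℕ => 2*(s:ℤ)) → BHCF.G h (2*n) y = 0 := by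
    intro y hy hny
    simp only [Finset.mem_Icc] at hy
    simp only [Finset.mem_image, Finset.mem_range, not_exists, not_and] at hny
    have hodd : y % 2 = 1 := by
      by_contra hodd
      have h2 : y % 2 = 0 := by omega
      have := hny (y/2).toNat (by omega)
      omega
    rw [BHCF.G, if_neg (by push_cast; omega)]
  have hinj : ∀ x ∈ Finset.range (h/2+1), ∀ y ∈ Finset.range (h/2+1),
      (fun s : ℕ => 2*(s:ℤ)) x = (fun s : ℕ => 2*(s:ℤ)) y → x = y := by
    intro x _ y _ hxy
    simp only at hxy
    omega
  rw [← Finset.sum_subset hsub hzero, Finset.sum_image hinj]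
  refine Finset.sum_congr rfl fun s hs => ?_
  simp only [Finset.mem_range] at hs
  exact BHCF.G_eval h n s (by omega)
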